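/- For every 0 ≤ a ≤ 1, the number |B(an)| of permutations σ of {1,…,n} with d(σ) ≤ ⌊an⌋ satisfies lim_{n→∞} log|B(an)| / (n log n) = a. -/

import Mathlib

open Filter Real

noncomputable section

/-- `d(σ)`: the minimal number of transpositions whose product is `σ`,
equal to `n` minus the number of cycles of `σ` (fixed points counting as cycles). -/
def permDist {n : ℕ} (σ : Equiv.Perm (Fin n)) : ℕ :=
  σ.cycleType.sum - σ.cycleType.card

section AuxCombinatorics

open Equiv Equiv.Perm Finset Nat



lemma swap_mul_isCycle {α : Type*} [DecidableEq α] [Fintype α] {c : Equiv.Perm α} (hc : c.IsCycle)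
    {a b : α} (ha : c a = a) (hb : c b ≠ b) (hab : a ≠ b) :
    (Equiv.swap a b * c).IsCycle ∧ (Equiv.swap a b * c).support = insert a c.support := by
  have hfix : ∀ x, x ≠ a → c x ≠ a := by
    intro x hx h
    exact hx (c.injective (h.trans ha.symm))
  have happ : ∀ x, (Equiv.swap a b * c) x = Equiv.swap a b (c x) := fun x => rfl
  have hda : (Equiv.swap a b * c) a = b := by
    rw [happ, ha, Equiv.swap_apply_left]
  constructor
  · refine ⟨a, by rw [hda]; exact fun h => hab h.symm, ?_⟩
    intro y hy
    have hbase : (Equiv.swap a b * c).SameCycle a b := ⟨1, by simpa using hda⟩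
    have key : ∀ k : ℕ, (Equiv.swap a b * c).SameCycle a ((c ^ k) b) := by
      intro k
      induction k with
      | zero => simpa using hbase
      | succ k ih =>
        have hpow : (c ^ (k+1)) b = c ((c ^ k) b) := by
          rw [pow_succ' c k]; rfl
        set y := (c ^ k) b with hy
        by_cases hyy : c y = y
        · rw [hpow, hyy]; exact ih
        · by_cases hyb : c y = b
          · rw [hpow, hyb]; exact hbase
          · have hya : c y ≠ a := hfix y (by intro h; rw [h, ha] at hyy; exact hyy rfl)
            have : (Equiv.swap a b * c) y = c y := by
              rw [happ, Equiv.swap_apply_of_ne_of_ne hya hyb]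
            rw [hpow]
            exact ih.trans ⟨1, by simpa using this⟩
    by_cases hya : y = a
    · rw [hya]
    · have hcy : c y ≠ y := by
        intro h
        apply hy
        rw [happ, h]
        rcases eq_or_ne y b with rfl | hyb
        · exact absurd h hb
        · exact Equiv.swap_apply_of_ne_of_ne (fun hh => hya hh) hyb
      obtain ⟨i, hi⟩ := hc.exists_pow_eq hb hcy
      rw [← hi]
      exact key i
  · ext x
    simp only [Equiv.Perm.mem_support, Finset.mem_insert]
    constructor
    · intro hx
      by_cases hxa : x = a
      · left; exact hxa
      · right
        intro hcx
        apply hx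
        rw [happ, hcx]
        rcases eq_or_ne x b with rfl | hxb
        · exact absurd hcx hb
        · exact Equiv.swap_apply_of_ne_of_ne (fun h => hxa h) hxb
    · intro hx
      rcases hx with rfl | hx
      · rw [hda]; exact fun h => hab h.symm
      · have hxa : x ≠ a := fun h => hx (by rw [h, ha])
        rw [happ]
        have hcxa : c x ≠ a := hfix x hxa
        by_cases hcxb : c x = b
        · rw [hcxb, Equiv.swap_apply_right]
          exact fun h => hxa h.symm
        · rw [Equiv.swap_apply_of_ne_of_ne hcxa hcxb]
          exact hx



lemma swap_mul_support_subset {α : Type*} [DecidableEq α] [Fintype α] (t : Equiv.Perm α) (a b : α) :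
    (Equiv.swap a b * t).support ⊆ insert a (insert b t.support) := by
  intro x hx
  simp only [Finset.mem_insert, Equiv.Perm.mem_support] at *
  by_contra h
  push_neg at h
  obtain ⟨h1, h2, h3⟩ := h
  apply hx
  show Equiv.swap a b (t x) = x
  rw [h3, Equiv.swap_apply_of_ne_of_ne h1 h2]

lemma cycleType_swap_mul {α : Type*} [DecidableEq α] [Fintype α] (σ : Equiv.Perm α) :
    ∀ a b, σ a = a → σ b ≠ b → a ≠ b →
      (Equiv.swap a b * σ).cycleType.sum = σ.cycleType.sum + 1 ∧
      (Equiv.swap a b * σ).cycleType.card = σ.cycleType.card := by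
  induction σ using Equiv.Perm.cycle_induction_on with
  | base_one => intro a b _ hb _; simp at hb
  | base_cycles c hc =>
    intro a b ha hb hab
    obtain ⟨hcyc, hsupp⟩ := swap_mul_isCycle hc ha hb hab
    have hanotin : a ∉ c.support := by simp [Equiv.Perm.mem_support, ha]
    rw [hcyc.cycleType, hc.cycleType, hsupp, Finset.card_insert_of_notMem hanotin]
    simp
  | induction_disjoint c t hdisj hcyc ihc iht =>
    intro a b ha hb hab
    have hsupp_mul : (c * t).support = c.support ∪ t.support := hdisj.support_mul
    have hanot : a ∉ c.support ∪ t.support := by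
      rw [← hsupp_mul]; simp [Equiv.Perm.mem_support, ha]
    have hac : c a = a := by
      have := (Finset.notMem_union.mp hanot).1; rwa [Equiv.Perm.notMem_support] at this
    have hat : t a = a := by
      have := (Finset.notMem_union.mp hanot).2; rwa [Equiv.Perm.notMem_support] at this
    have hbin : b ∈ c.support ∪ t.support := by
      rw [← hsupp_mul]; simpa [Equiv.Perm.mem_support] using hb
    have hdsupp := Equiv.Perm.disjoint_iff_disjoint_support.mp hdisj
    rcases Finset.mem_union.mp hbin with hbc | hbt
    · -- b in support of the cycle c
      have hbc' : c b ≠ b := Equiv.Perm.mem_support.mp hbc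
      have hbt : b ∉ t.support := Finset.disjoint_left.mp hdsupp hbc
      obtain ⟨hcyc', hsupp'⟩ := swap_mul_isCycle hcyc hac hbc' hab
      have hanotc : a ∉ c.support := (Finset.notMem_union.mp hanot).1
      have hdisj' : Equiv.Perm.Disjoint (Equiv.swap a b * c) t := by
        rw [Equiv.Perm.disjoint_iff_disjoint_support, hsupp']
        rw [Finset.disjoint_insert_left]
        refine ⟨?_, hdsupp⟩
        exact (Finset.notMem_union.mp hanot).2
      have e1 : Equiv.swap a b * (c * t) = (Equiv.swap a b * c) * t := (mul_assoc _ _ _).symm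
      rw [e1, hdisj'.cycleType_mul, hdisj.cycleType_mul, hcyc'.cycleType, hcyc.cycleType, hsupp',
        Finset.card_insert_of_notMem hanotc]
      simp [Nat.add_assoc, Nat.add_comm, Nat.add_left_comm]
    · -- b in support of t
      have hbt' : t b ≠ b := Equiv.Perm.mem_support.mp hbt
      have hbc : b ∉ c.support := Finset.disjoint_right.mp hdsupp hbt
      have hbc' : c b = b := Equiv.Perm.notMem_support.mp hbc
      have hcomm : Equiv.swap a b * c = c * Equiv.swap a b := by
        have : Equiv.Perm.Disjoint (Equiv.swap a b) c := by
          intro x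
          rcases eq_or_ne x a with rfl | hxa
          · right; exact hac
          · rcases eq_or_ne x b with rfl | hxb
            · right; exact hbc'
            · left; exact Equiv.swap_apply_of_ne_of_ne hxa hxb
        exact this.commute.eq
      have e1 : Equiv.swap a b * (c * t) = c * (Equiv.swap a b * t) := by
        rw [← mul_assoc, hcomm, mul_assoc]
      obtain ⟨ihsum, ihcard⟩ := iht a b hat hbt' hab
      have hdisj' : Equiv.Perm.Disjoint c (Equiv.swap a b * t) := by
        rw [Equiv.Perm.disjoint_iff_disjoint_support]
        refine Finset.disjoint_of_subset_right (swap_mul_support_subset t a b) ?_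
        rw [Finset.disjoint_insert_right, Finset.disjoint_insert_right]
        exact ⟨(Finset.notMem_union.mp hanot).1, hbc, hdsupp⟩
      rw [e1, hdisj'.cycleType_mul, hdisj.cycleType_mul]
      refine ⟨?_, ?_⟩
      · simp only [Multiset.sum_add, ihsum]; omega
      · simp only [Multiset.card_add, ihcard]


lemma two_mul_card_le_sum {s : Multiset ℕ} (h : ∀ x ∈ s, 2 ≤ x) :
    2 * Multiset.card s ≤ s.sum := by
  induction s using Multiset.induction_on with
  | empty => simp
  | cons a s ih =>
    simp only [Multiset.card_cons, Multiset.sum_cons]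
    have h1 := h a (Multiset.mem_cons_self a s)
    have h2 := ih (fun x hx => h x (Multiset.mem_cons_of_mem hx))
    omega

lemma cycleType_card_le_sum {n : ℕ} (σ : Equiv.Perm (Fin n)) :
    Multiset.card σ.cycleType ≤ σ.cycleType.sum := by
  have := two_mul_card_le_sum (s := σ.cycleType) (fun x hx => Equiv.Perm.two_le_of_mem_cycleType hx)
  omega

lemma permDist_one {n : ℕ} : permDist (1 : Equiv.Perm (Fin n)) = 0 := by
  simp [permDist, Equiv.Perm.cycleType_one]

lemma permDist_eq_zero_iff {n : ℕ} {σ : Equiv.Perm (Fin n)} : permDist σ = 0 ↔ σ = 1 := by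
  constructor
  · intro h
    rw [permDist] at h
    have h2 := two_mul_card_le_sum (s := σ.cycleType)
      (fun x hx => Equiv.Perm.two_le_of_mem_cycleType hx)
    have : Multiset.card σ.cycleType = 0 := by omega
    exact Equiv.Perm.card_cycleType_eq_zero.mp this
  · rintro rfl; exact permDist_one

lemma permDist_extend {n : ℕ} (e : Equiv.Perm (Fin n)) :
    permDist (Equiv.Perm.decomposeFin.symm (0, e)) = permDist e := by
  have key : Equiv.Perm.decomposeFin.symm (0, e) = e.extendDomain (finSuccAboveEquiv 0) := by
    apply Equiv.ext
    intro x
    refine Fin.cases ?_ ?_ x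
    · rw [Equiv.Perm.decomposeFin_symm_apply_zero,
        Equiv.Perm.extendDomain_apply_not_subtype]
      simp
    · intro i
      rw [Equiv.Perm.decomposeFin_symm_apply_succ, Equiv.swap_self]
      have h1 : ∀ j : Fin n, ((finSuccAboveEquiv (0 : Fin (n+1))) j : Fin (n+1)) = j.succ := by
        intro j
        rw [finSuccAboveEquiv_apply]
        exact Fin.zero_succAbove j
      rw [Equiv.refl_apply, ← h1 i, ← h1 (e i), Equiv.Perm.extendDomain_apply_image]
  rw [key, permDist, permDist, Equiv.Perm.cycleType_extendDomain]

lemma decomposeFin_symm_eq {n : ℕ} (p : Fin (n+1)) (e : Equiv.Perm (Fin n)) :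
    Equiv.Perm.decomposeFin.symm (p, e) =
      Equiv.swap 0 p * Equiv.Perm.decomposeFin.symm (0, e) := by
  apply Equiv.ext
  intro x
  refine Fin.cases ?_ ?_ x
  · rw [Equiv.Perm.decomposeFin_symm_apply_zero]
    show _ = Equiv.swap 0 p (Equiv.Perm.decomposeFin.symm (0, e) 0)
    rw [Equiv.Perm.decomposeFin_symm_apply_zero, Equiv.swap_apply_left]
  · intro i
    rw [Equiv.Perm.decomposeFin_symm_apply_succ]
    show _ = Equiv.swap 0 p (Equiv.Perm.decomposeFin.symm (0, e) i.succ)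
    rw [Equiv.Perm.decomposeFin_symm_apply_succ, Equiv.swap_self, Equiv.refl_apply]

lemma permDist_decomposeFin {n : ℕ} (p : Fin (n+1)) (e : Equiv.Perm (Fin n)) :
    permDist (Equiv.Perm.decomposeFin.symm (p, e)) = permDist e + (if p = 0 then 0 else 1) := by
  rcases eq_or_ne p 0 with rfl | hp
  · simp [permDist_extend]
  · set E := Equiv.Perm.decomposeFin.symm (0, e) with hE
    have hE0 : E 0 = 0 := Equiv.Perm.decomposeFin_symm_apply_zero 0 e
    rw [decomposeFin_symm_eq, if_neg hp]
    by_cases hEp : E p = p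
    · have hdisj : Equiv.Perm.Disjoint (Equiv.swap 0 p) E := by
        intro x
        rcases eq_or_ne x 0 with rfl | hx0
        · right; exact hE0
        · rcases eq_or_ne x p with rfl | hxp
          · right; exact hEp
          · left; exact Equiv.swap_apply_of_ne_of_ne hx0 hxp
      have hct : (Equiv.swap 0 p * E).cycleType = (Equiv.swap 0 p).cycleType + E.cycleType :=
        hdisj.cycleType_mul
      have hsw : (Equiv.swap 0 p).cycleType = {2} := by
        rw [(Equiv.Perm.isCycle_swap (Ne.symm hp)).cycleType,
          Equiv.Perm.card_support_swap (Ne.symm hp)]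
      have hcle := cycleType_card_le_sum E
      have hpe : permDist e = E.cycleType.sum - Multiset.card E.cycleType := by
        rw [← permDist_extend e]; rfl
      rw [permDist, hct, hsw, hpe]
      simp only [Multiset.sum_add, Multiset.card_add, Multiset.sum_singleton,
        Multiset.card_singleton]
      omega
    · have hkey := cycleType_swap_mul E 0 p hE0 hEp (Ne.symm hp)
      have hcle := cycleType_card_le_sum E
      have hpe : permDist e = E.cycleType.sum - Multiset.card E.cycleType := by
        rw [← permDist_extend e]; rfl
      rw [permDist, hkey.1, hkey.2, hpe]
      omega

def Nball (n m : ℕ) : ℕ := Nat.card {σ : Equiv.Perm (Fin n) // permDist σ ≤ m}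

lemma one_le_Nball (n m : ℕ) : 1 ≤ Nball n m := by
  have : Nonempty {σ : Equiv.Perm (Fin n) // permDist σ ≤ m} :=
    ⟨⟨1, by rw [permDist_one]; omega⟩⟩
  exact Nat.card_pos

lemma Nball_zero (n : ℕ) : Nball n 0 = 1 := by
  haveI : Unique {σ : Equiv.Perm (Fin n) // permDist σ ≤ 0} :=
    { default := ⟨1, by rw [permDist_one]⟩
      uniq := by
        rintro ⟨σ, hσ⟩
        apply Subtype.ext
        exact permDist_eq_zero_iff.mp (Nat.le_zero.mp hσ) }
  exact Nat.card_unique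

lemma Nball_zero_n (m : ℕ) : Nball 0 m = 1 := by
  haveI : Unique {σ : Equiv.Perm (Fin 0) // permDist σ ≤ m} :=
    { default := ⟨1, by rw [permDist_one]; omega⟩
      uniq := by
        rintro ⟨σ, hσ⟩
        apply Subtype.ext
        exact Equiv.ext fun x => x.elim0 }
  exact Nat.card_unique

lemma Nball_succ (n m : ℕ) : Nball (n+1) (m+1) = Nball n (m+1) + n * Nball n m := by
  have h : ∀ σ : Equiv.Perm (Fin (n+1)), permDist σ ≤ m+1 ↔
      permDist (Equiv.Perm.decomposeFin.symm
        ((Equiv.Perm.decomposeFin σ).1, (Equiv.Perm.decomposeFin σ).2)) ≤ m+1 := by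
    intro σ
    rw [show ((Equiv.Perm.decomposeFin σ).1, (Equiv.Perm.decomposeFin σ).2)
        = Equiv.Perm.decomposeFin σ from rfl, Equiv.symm_apply_apply]
  rw [Nball, Nat.card_congr ((Equiv.Perm.decomposeFin.subtypeEquiv h).trans
    (Equiv.subtypeProdEquivSigmaSubtype (fun (p : Fin (n+1)) (e : Equiv.Perm (Fin n)) =>
      permDist (Equiv.Perm.decomposeFin.symm (p, e)) ≤ m+1)))]
  rw [Nat.card_eq_fintype_card, Fintype.card_sigma]
  have hterm : ∀ p : Fin (n+1), Fintype.card
      {e : Equiv.Perm (Fin n) // permDist (Equiv.Perm.decomposeFin.symm (p, e)) ≤ m+1}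
      = if p = 0 then Nball n (m+1) else Nball n m := by
    intro p
    rcases eq_or_ne p 0 with rfl | hp
    · rw [if_pos rfl, Nball, Nat.card_eq_fintype_card]
      apply Fintype.card_congr
      apply Equiv.subtypeEquivRight
      intro e
      rw [permDist_decomposeFin]
      simp
    · rw [if_neg hp, Nball, Nat.card_eq_fintype_card]
      apply Fintype.card_congr
      apply Equiv.subtypeEquivRight
      intro e
      rw [permDist_decomposeFin, if_neg hp]
      omega
  rw [Finset.sum_congr rfl (fun p _ => hterm p)]
  have h0 : (Finset.univ : Finset (Fin (n+1))) = insert 0 ((Finset.univ).erase 0) := by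
    rw [Finset.insert_erase (Finset.mem_univ 0)]
  rw [h0, Finset.sum_insert (Finset.notMem_erase _ _), if_pos rfl]
  congr 1
  rw [Finset.sum_congr rfl (fun x hx => if_neg (Finset.ne_of_mem_erase hx)),
    Finset.sum_const, Finset.card_erase_of_mem (Finset.mem_univ _), Finset.card_univ,
    Fintype.card_fin]
  simp [mul_comm]

lemma Nball_le_sum (n m : ℕ) :
    Nball n m ≤ ∑ k ∈ Finset.range (m+1), n.choose k * n ^ k := by
  induction n generalizing m with
  | zero =>
    rw [Nball_zero_n]
    calc 1 = Nat.choose 0 0 * 0 ^ 0 := by norm_num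
    _ ≤ _ := Finset.single_le_sum (f := fun k => Nat.choose 0 k * 0 ^ k)
        (fun i _ => Nat.zero_le _) (Finset.mem_range.mpr (by omega))
  | succ n ih =>
    cases m with
    | zero => rw [Nball_zero]; simp
    | succ m =>
      rw [Nball_succ]
      calc Nball n (m+1) + n * Nball n m
          ≤ (∑ k ∈ Finset.range (m+2), n.choose k * n ^ k)
            + n * ∑ k ∈ Finset.range (m+1), n.choose k * n ^ k := by
            have h1 := ih (m+1)
            have h2 := ih m
            exact Nat.add_le_add h1 (Nat.mul_le_mul_left n h2)
      _ = (∑ k ∈ Finset.range (m+1), n.choose (k+1) * n ^ (k+1)) + n.choose 0 * n ^ 0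
            + ∑ k ∈ Finset.range (m+1), n.choose k * n ^ (k+1) := by
            rw [Finset.sum_range_succ' (fun k => n.choose k * n ^ k) (m+1), Finset.mul_sum]
            congr 1
            apply Finset.sum_congr rfl
            intro k _
            ring
      _ = 1 + ∑ k ∈ Finset.range (m+1), ((n+1).choose (k+1)) * n ^ (k+1) := by
            rw [Nat.choose_zero_right, pow_zero, mul_one]
            rw [add_right_comm, add_comm _ 1]
            congr 1
            rw [← Finset.sum_add_distrib]
            apply Finset.sum_congr rfl
            intro k _
            rw [Nat.choose_succ_succ n k, Nat.add_mul]
            ring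
      _ ≤ ∑ k ∈ Finset.range (m+2), (n+1).choose k * (n+1) ^ k := by
            rw [Finset.sum_range_succ' (fun k => (n+1).choose k * (n+1) ^ k) (m+1)]
            rw [Nat.choose_zero_right, pow_zero, mul_one, add_comm]
            apply Nat.add_le_add_right
            apply Finset.sum_le_sum
            intro k _
            exact Nat.mul_le_mul_left _ (Nat.pow_le_pow_left (by omega) _)

lemma choose_mul_pow_mono {n k : ℕ} (hk : k < n) :
    n.choose k * n ^ k ≤ n.choose (k+1) * n ^ (k+1) := by
  have h1 : n.choose (k+1) * (k+1) = n.choose k * (n - k) := Nat.choose_succ_right_eq n k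
  have h2 : n.choose k ≤ n.choose (k+1) * n := by
    calc n.choose k ≤ n.choose k * (n - k) := Nat.le_mul_of_pos_right _ (by omega)
    _ = n.choose (k+1) * (k+1) := h1.symm
    _ ≤ n.choose (k+1) * n := Nat.mul_le_mul_left _ (by omega)
  calc n.choose k * n ^ k ≤ (n.choose (k+1) * n) * n ^ k := Nat.mul_le_mul_right _ h2
  _ = n.choose (k+1) * n ^ (k+1) := by ring

lemma choose_mul_pow_le {n : ℕ} : ∀ m k : ℕ, k ≤ m → m ≤ n →
    n.choose k * n ^ k ≤ n.choose m * n ^ m := by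
  intro m
  induction m with
  | zero => intro k hk _; have hk0 : k = 0 := Nat.le_zero.mp hk; rw [hk0]
  | succ m ih =>
    intro k hk hmn
    rcases Nat.eq_or_lt_of_le hk with heq | hlt
    · rw [heq]
    · exact (ih k (Nat.lt_succ_iff.mp hlt) (by omega)).trans (choose_mul_pow_mono (by omega))

lemma Nball_le_final {n m : ℕ} (hm : m ≤ n) :
    Nball n m ≤ (m+1) * (n.choose m * n ^ m) := by
  calc Nball n m ≤ ∑ k ∈ Finset.range (m+1), n.choose k * n ^ k := Nball_le_sum n m
  _ ≤ (m+1) * (n.choose m * n ^ m) := by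
    have := Finset.sum_le_card_nsmul (Finset.range (m+1)) (fun k => n.choose k * n ^ k)
      (n.choose m * n ^ m)
      (fun k hk => choose_mul_pow_le m k (Nat.lt_succ_iff.mp (Finset.mem_range.mp hk)) hm)
    simpa [Finset.card_range, smul_eq_mul] using this

lemma factorial_le_Nball {n m k : ℕ} (hkn : k ≤ n) (hkm : k ≤ m + 1) :
    k ! ≤ Nball n m := by
  classical
  let f : Fin k ≃ {i : Fin n // i.val < k} :=
    { toFun := fun i => ⟨⟨i.1, lt_of_lt_of_le i.2 hkn⟩, i.2⟩
      invFun := fun j => ⟨j.1.1, j.2⟩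
      left_inv := fun i => rfl
      right_inv := fun j => rfl }
  have hdist : ∀ g : Equiv.Perm (Fin k), permDist (g.extendDomain f) ≤ m := by
    intro g
    have hct : (g.extendDomain f).cycleType = g.cycleType :=
      Equiv.Perm.cycleType_extendDomain f
    rw [permDist, hct]
    have hsum : g.cycleType.sum ≤ k := by
      rw [Equiv.Perm.sum_cycleType]
      calc g.support.card ≤ Fintype.card (Fin k) := Finset.card_le_univ _
      _ = k := Fintype.card_fin k
    rcases Nat.eq_zero_or_pos (Multiset.card g.cycleType) with h0 | h0
    · have h00 : g.cycleType = 0 := Multiset.card_eq_zero.mp h0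
      rw [h00]; simp
    · omega
  have hinj : Function.Injective (fun g : Equiv.Perm (Fin k) =>
      (⟨g.extendDomain f, hdist g⟩ : {σ : Equiv.Perm (Fin n) // permDist σ ≤ m})) := by
    intro g1 g2 h
    have h2 := congrArg Subtype.val h
    exact Equiv.Perm.extendDomainHom_injective f h2
  calc k ! = Nat.card (Equiv.Perm (Fin k)) := by
        rw [Nat.card_eq_fintype_card, Fintype.card_perm, Fintype.card_fin]
  _ ≤ Nball n m := Nat.card_le_card_of_injective _ hinj

end AuxCombinatorics

lemma log_factorial_ge (k : ℕ) :
    (k : ℝ) * Real.log k - k ≤ Real.log (Nat.factorial k) := by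
  rcases Nat.eq_zero_or_pos k with rfl | hk
  · simp
  · have hx : (0:ℝ) ≤ k := by positivity
    have h1 : ((k:ℝ))^k / (Nat.factorial k) ≤ Real.exp k := Real.pow_div_factorial_le_exp _ hx k
    have hkf : (0:ℝ) < (Nat.factorial k : ℝ) := by
      exact_mod_cast Nat.factorial_pos k
    have h2 : ((k:ℝ))^k ≤ Real.exp k * (Nat.factorial k : ℝ) := by
      rwa [div_le_iff₀ hkf] at h1
    have h3 : Real.log (((k:ℝ))^k) ≤ Real.log (Real.exp k * (Nat.factorial k : ℝ)) :=
      Real.log_le_log (by positivity) h2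
    rw [Real.log_pow, Real.log_mul (Real.exp_ne_zero _) (ne_of_gt hkf), Real.log_exp] at h3
    linarith

lemma aux_tendsto {a : ℝ} (ha : 0 < a) (u : ℕ → ℕ)
    (hl : ∀ n : ℕ, a * n - 1 ≤ (u n : ℝ))
    (hu : ∀ n : ℕ, (u n : ℝ) ≤ a * n + 1) :
    Filter.Tendsto (fun n : ℕ => (u n : ℝ) / n) Filter.atTop (nhds a) ∧
    Filter.Tendsto (fun n : ℕ => Real.log (u n) / Real.log n) Filter.atTop (nhds 1) := by
  have hdiv : Tendsto (fun n : ℕ => (u n : ℝ) / n) atTop (nhds a) := by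
    have l1 : Tendsto (fun n : ℕ => a - 1 / (n:ℝ)) atTop (nhds a) := by
      have := (tendsto_const_nhds (x := a) (f := (atTop : Filter ℕ))).sub
        tendsto_one_div_atTop_nhds_zero_nat
      simpa using this
    have l2 : Tendsto (fun n : ℕ => a + 1 / (n:ℝ)) atTop (nhds a) := by
      have := (tendsto_const_nhds (x := a) (f := (atTop : Filter ℕ))).add
        tendsto_one_div_atTop_nhds_zero_nat
      simpa using this
    apply tendsto_of_tendsto_of_tendsto_of_le_of_le' l1 l2
    · filter_upwards [eventually_gt_atTop 0] with n h2
      have hn : (0:ℝ) < n := by exact_mod_cast h2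
      have heq : a - 1/(n:ℝ) = (a * n - 1)/n := by field_simp
      rw [heq, div_le_div_iff₀ hn hn]
      have := hl n
      nlinarith
    · filter_upwards [eventually_gt_atTop 0] with n h2
      have hn : (0:ℝ) < n := by exact_mod_cast h2
      have heq : a + 1/(n:ℝ) = (a * n + 1)/n := by field_simp
      rw [heq, div_le_div_iff₀ hn hn]
      have := hu n
      nlinarith
  refine ⟨hdiv, ?_⟩
  have hupos : ∀ᶠ n : ℕ in atTop, (1:ℝ) ≤ (u n : ℝ) := by
    have h2a : Tendsto (fun n : ℕ => a * (n:ℝ)) atTop atTop :=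
      Tendsto.const_mul_atTop ha tendsto_natCast_atTop_atTop
    filter_upwards [h2a.eventually_ge_atTop 2] with n hn
    have := hl n
    linarith
  have hlogn : Tendsto (fun n : ℕ => Real.log n) atTop atTop :=
    Real.tendsto_log_atTop.comp tendsto_natCast_atTop_atTop
  have hlogdiff : Tendsto (fun n : ℕ => Real.log (u n) - Real.log n) atTop
      (nhds (Real.log a)) := by
    have hcont : Tendsto (fun n : ℕ => Real.log ((u n : ℝ)/n)) atTop (nhds (Real.log a)) :=
      ((Real.continuousAt_log (ne_of_gt ha)).tendsto.comp hdiv)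
    apply hcont.congr'
    filter_upwards [hupos, eventually_gt_atTop 0] with n h1 h2
    have hu0 : (u n : ℝ) ≠ 0 := by linarith
    have hn0 : (n : ℝ) ≠ 0 := by
      have : (0:ℝ) < n := by exact_mod_cast h2
      linarith
    rw [Real.log_div hu0 hn0]
  have h0 : Tendsto (fun n : ℕ => (Real.log (u n) - Real.log n) / Real.log n) atTop (nhds 0) :=
    hlogdiff.div_atTop hlogn
  have h1 : Tendsto (fun n : ℕ => 1 + (Real.log (u n) - Real.log n) / Real.log n) atTop
      (nhds 1) := by
    simpa using (tendsto_const_nhds (x := (1:ℝ)) (f := (atTop : Filter ℕ))).add h0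
  apply h1.congr'
  filter_upwards [eventually_gt_atTop 1] with n hn
  have hlpos : 0 < Real.log n := Real.log_pos (by exact_mod_cast hn)
  field_simp
  ring

def mf (a : ℝ) (n : ℕ) : ℕ := ⌊a * (n:ℝ)⌋₊
def kf (a : ℝ) (n : ℕ) : ℕ := min (mf a n + 1) n

/-- `log |B(an)| / (n log n) → a` for `0 ≤ a ≤ 1`, where `B(an)` is the
ball of radius `⌊an⌋` around the identity in the transposition metric. -/
theorem statement2 (a : ℝ) (h0 : 0 ≤ a) (h1 : a ≤ 1) :
    Tendsto (fun n : ℕ =>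
        Real.log (Nat.card {σ : Equiv.Perm (Fin n) // permDist σ ≤ ⌊a * (n : ℝ)⌋₊}) /
          ((n : ℝ) * Real.log n))
      atTop (nhds a) := by
  have hdivle : ∀ x y d : ℝ, 0 < d → x ≤ y → x / d ≤ y / d := by
    intro x y d hd hxy
    rw [div_eq_mul_inv, div_eq_mul_inv]
    exact mul_le_mul_of_nonneg_right hxy (inv_nonneg.mpr hd.le)
  rcases eq_or_lt_of_le h0 with rfl | ha
  · apply Tendsto.congr (f₁ := fun _ : ℕ => (0:ℝ))
    · intro n
      have hm : ⌊(0:ℝ) * (n:ℝ)⌋₊ = 0 := by norm_num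
      rw [hm]
      have hN : (Nat.card {σ : Equiv.Perm (Fin n) // permDist σ ≤ 0}) = 1 := Nball_zero n
      rw [hN]
      simp
    · exact tendsto_const_nhds
  · suffices h : Tendsto (fun n : ℕ =>
        Real.log (Nball n (mf a n)) / ((n : ℝ) * Real.log n)) atTop (nhds a) by exact h
    have hm_le : ∀ n : ℕ, (mf a n : ℝ) ≤ a * n := fun n => Nat.floor_le (by positivity)
    have hm_gt : ∀ n : ℕ, a * n - 1 ≤ (mf a n : ℝ) := by
      intro n
      have h2 : a * (n:ℝ) < (mf a n : ℝ) + 1 := by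
        exact_mod_cast Nat.lt_floor_add_one (a * (n:ℝ))
      linarith
    have hmn : ∀ n : ℕ, mf a n ≤ n := by
      intro n
      have hle : a * (n:ℝ) ≤ ((n:ℕ):ℝ) := by nlinarith [Nat.cast_nonneg (α := ℝ) n]
      have h2 := Nat.floor_le_floor hle
      simpa [mf] using h2
    have hk_n : ∀ n, kf a n ≤ n := fun n => min_le_right _ _
    have hk_m : ∀ n, kf a n ≤ mf a n + 1 := fun n => min_le_left _ _
    have hk_ge : ∀ n : ℕ, a * n - 1 ≤ (kf a n : ℝ) := by
      intro n
      have h2 : a * n ≤ ((min (mf a n + 1) n : ℕ) : ℝ) := by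
        rw [Nat.cast_min]
        apply le_min
        · push_cast
          linarith [hm_gt n]
        · nlinarith [Nat.cast_nonneg (α := ℝ) n]
      have h3 : ((min (mf a n + 1) n : ℕ) : ℝ) = (kf a n : ℝ) := rfl
      linarith [h2]
    have hk_le : ∀ n : ℕ, (kf a n : ℝ) ≤ a * n + 1 := by
      intro n
      have h2 : ((kf a n : ℕ):ℝ) ≤ ((mf a n + 1 : ℕ):ℝ) := by exact_mod_cast hk_m n
      push_cast at h2
      linarith [hm_le n]
    obtain ⟨hmdiv, hmlog⟩ := aux_tendsto ha (mf a) (fun n => hm_gt n)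
      (fun n => by linarith [hm_le n])
    obtain ⟨hkdiv, hklog⟩ := aux_tendsto ha (kf a) hk_ge hk_le
    obtain ⟨-, hm1log⟩ := aux_tendsto ha (fun n => mf a n + 1)
      (fun n => by push_cast; linarith [hm_gt n]) (fun n => by push_cast; linarith [hm_le n])
    have hlogn : Tendsto (fun n : ℕ => Real.log n) atTop atTop :=
      Real.tendsto_log_atTop.comp tendsto_natCast_atTop_atTop
    have h1logn : Tendsto (fun n : ℕ => 1 / Real.log n) atTop (nhds 0) :=
      tendsto_const_nhds.div_atTop hlogn
    have hinvn := tendsto_one_div_atTop_nhds_zero_nat (𝕜 := ℝ)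
    have hL : Tendsto (fun n : ℕ => ((kf a n : ℝ) * Real.log (kf a n) - (kf a n : ℝ)) /
        ((n:ℝ) * Real.log n)) atTop (nhds a) := by
      have base : Tendsto (fun n : ℕ => ((kf a n : ℝ)/n) * (Real.log (kf a n)/Real.log n)
          - ((kf a n : ℝ)/n) * (1/Real.log n)) atTop (nhds (a * 1 - a * 0)) :=
        (hkdiv.mul hklog).sub (hkdiv.mul h1logn)
      rw [show a * 1 - a * 0 = a by ring] at base
      apply base.congr'
      filter_upwards [eventually_ge_atTop 2] with n hn
      have hn1 : (1:ℝ) < n := by exact_mod_cast Nat.lt_of_lt_of_le Nat.one_lt_two hn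
      have hn0 : (n:ℝ) ≠ 0 := by linarith
      have hlp : Real.log n ≠ 0 := ne_of_gt (Real.log_pos hn1)
      field_simp
    have hU : Tendsto (fun n : ℕ => (Real.log ((mf a n + 1 : ℕ)) + 2 * (mf a n : ℝ) * Real.log n
        - ((mf a n : ℝ) * Real.log (mf a n) - (mf a n : ℝ))) / ((n:ℝ) * Real.log n))
        atTop (nhds a) := by
      have base : Tendsto (fun n : ℕ =>
          (Real.log ((mf a n + 1 : ℕ))/Real.log n) * (1/(n:ℝ))
          + 2 * ((mf a n : ℝ)/n)
          - (((mf a n : ℝ)/n) * (Real.log (mf a n)/Real.log n)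
            - ((mf a n : ℝ)/n) * (1/Real.log n)))
          atTop (nhds (1 * 0 + 2 * a - (a * 1 - a * 0))) :=
        ((hm1log.mul hinvn).add (tendsto_const_nhds.mul hmdiv)).sub
          ((hmdiv.mul hmlog).sub (hmdiv.mul h1logn))
      rw [show 1 * 0 + 2 * a - (a * 1 - a * 0) = a by ring] at base
      apply base.congr'
      filter_upwards [eventually_ge_atTop 2] with n hn
      have hn1 : (1:ℝ) < n := by exact_mod_cast Nat.lt_of_lt_of_le Nat.one_lt_two hn
      have hn0 : (n:ℝ) ≠ 0 := by linarith
      have hlp : Real.log n ≠ 0 := ne_of_gt (Real.log_pos hn1)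
      field_simp
    apply tendsto_of_tendsto_of_tendsto_of_le_of_le' hL hU
    · filter_upwards [eventually_ge_atTop 2] with n hn
      have hn1 : (1:ℝ) < n := by exact_mod_cast Nat.lt_of_lt_of_le Nat.one_lt_two hn
      have hlp : (0:ℝ) < Real.log n := Real.log_pos hn1
      have hd : (0:ℝ) < (n:ℝ) * Real.log n := by nlinarith
      have hfact : Nat.factorial (kf a n) ≤ Nball n (mf a n) :=
        factorial_le_Nball (hk_n n) (hk_m n)
      have hlogN : (kf a n : ℝ) * Real.log (kf a n) - (kf a n : ℝ) ≤
          Real.log (Nball n (mf a n)) := by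
        refine (log_factorial_ge (kf a n)).trans ?_
        apply Real.log_le_log
        · exact_mod_cast Nat.factorial_pos (kf a n)
        · exact_mod_cast hfact
      exact hdivle _ _ _ hd hlogN
    · filter_upwards [eventually_ge_atTop 2] with n hn
      have hn1 : (1:ℝ) < n := by exact_mod_cast Nat.lt_of_lt_of_le Nat.one_lt_two hn
      have hn0 : (0:ℝ) < n := by linarith
      have hlp : (0:ℝ) < Real.log n := Real.log_pos hn1
      have hd : (0:ℝ) < (n:ℝ) * Real.log n := by nlinarith
      have hfne : (Nat.factorial (mf a n) : ℝ) ≠ 0 := by positivity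
      have hm1ne : ((mf a n + 1 : ℕ) : ℝ) ≠ 0 := by positivity
      have hpne : ((n:ℝ)^(mf a n)) ≠ 0 := pow_ne_zero _ (ne_of_gt hn0)
      have hNle : (Nball n (mf a n) : ℝ) ≤ ((mf a n + 1 : ℕ) : ℝ) *
          ((n:ℝ)^(mf a n) / (Nat.factorial (mf a n)) * (n:ℝ)^(mf a n)) := by
        have hc : (Nball n (mf a n) : ℝ) ≤
            ((mf a n + 1 : ℕ):ℝ) * ((n.choose (mf a n):ℝ) * (n:ℝ)^(mf a n)) := by
          exact_mod_cast Nball_le_final (hmn n)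
        refine hc.trans ?_
        have h2 : (n.choose (mf a n) : ℝ) ≤ (n:ℝ)^(mf a n) / (Nat.factorial (mf a n)) :=
          Nat.choose_le_pow_div _ _
        have hpos : (0:ℝ) ≤ (n:ℝ)^(mf a n) := by positivity
        have h3 : ((n.choose (mf a n):ℝ) * (n:ℝ)^(mf a n)) ≤
            ((n:ℝ)^(mf a n) / (Nat.factorial (mf a n)) * (n:ℝ)^(mf a n)) :=
          mul_le_mul_of_nonneg_right h2 hpos
        exact mul_le_mul_of_nonneg_left h3 (by positivity)
      have hN1 : (1:ℝ) ≤ (Nball n (mf a n) : ℝ) := by exact_mod_cast one_le_Nball n (mf a n)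
      have hlog1 : Real.log (Nball n (mf a n)) ≤
          Real.log (((mf a n + 1 : ℕ):ℝ) *
            ((n:ℝ)^(mf a n) / (Nat.factorial (mf a n)) * (n:ℝ)^(mf a n))) :=
        Real.log_le_log (by linarith) hNle
      rw [Real.log_mul hm1ne (mul_ne_zero (div_ne_zero hpne hfne) hpne),
        Real.log_mul (div_ne_zero hpne hfne) hpne, Real.log_div hpne hfne,
        Real.log_pow] at hlog1
      have hlf := log_factorial_ge (mf a n)
      apply hdivle _ _ _ hd
      linarith
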